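/- arXiv:0704.3821 — 2 statements merged into one kernel-verified Lean document; each statement's English description precedes it below -/
import Mathlib

section
/- For all m, n ≥ 0: 2^{mn} = Σ_P ∏_{B ∈ P} Conn(#(B ∩ X), #(B ∩ Y)), where X and Y are disjoint sets with #X = m and #Y = n (e.g., the two summands of Fin m ⊕ Fin n), the sum is over all partitions P of X ∪ Y into nonempty blocks, and Conn(a,b) denotes the number of connected bipartite graphs on a fixed bipartition with parts of sizes a and b. -/
open Finset SimpleGraph

/-- `connBipartiteCount a b` is the number of connected bipartite graphs on the fixed
bipartition `(Fin a, Fin b)`, i.e. the number of simple graphs on `Fin a ⊕ Fin b` all of whose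
edges join the two summands and which are connected (so `connBipartiteCount 0 0 = 0`). -/
noncomputable def connBipartiteCount (a b : ℕ) : ℕ :=
  Nat.card {G : SimpleGraph (Fin a ⊕ Fin b) //
    (∀ u v : Fin a ⊕ Fin b, G.Adj u v → u.isLeft ≠ v.isLeft) ∧ G.Connected}

section Aux

variable {V : Type*} [Fintype V] [DecidableEq V]

/-- Restriction (induced subgraph) of a graph to a finset of vertices. -/
private def restrict (G : SimpleGraph V) (B : Finset V) : SimpleGraph ↥B :=
  G.comap (Subtype.val)

/-- The partition of the vertex set into connected components. -/
private noncomputable def compPart (G : SimpleGraph V) : Finpartition (univ : Finset V) :=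
  letI : DecidableRel G.reachableSetoid.r := Classical.decRel _
  Finpartition.ofSetoid G.reachableSetoid

private lemma mem_part_compPart (G : SimpleGraph V) (a b : V) :
    b ∈ (compPart G).part a ↔ G.Reachable a b := by
  letI : DecidableRel G.reachableSetoid.r := Classical.decRel _
  exact Finpartition.mem_part_ofSetoid_iff_rel

private lemma finpartition_eq_of_part_eq {P Q : Finpartition (univ : Finset V)}
    (h : ∀ a, P.part a = Q.part a) : P = Q := by
  ext t
  constructor
  · intro ht
    obtain ⟨a, ha⟩ := P.nonempty_of_mem_parts ht
    have := P.part_eq_of_mem ht ha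
    rw [← this, h a]
    exact Q.part_mem.mpr (mem_univ a)
  · intro ht
    obtain ⟨a, ha⟩ := Q.nonempty_of_mem_parts ht
    have := Q.part_eq_of_mem ht ha
    rw [← this, ← h a]
    exact P.part_mem.mpr (mem_univ a)

private lemma compPart_eq_iff {G : SimpleGraph V} {P : Finpartition (univ : Finset V)} :
    compPart G = P ↔ ∀ a b, G.Reachable a b ↔ b ∈ P.part a := by
  constructor
  · rintro rfl a b; exact (mem_part_compPart G a b).symm
  · intro h
    apply finpartition_eq_of_part_eq
    intro a
    ext b
    rw [mem_part_compPart]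
    exact h a b

/-- Glue a family of graphs on the parts of a partition into one graph. -/
private def glue (P : Finpartition (univ : Finset V))
    (F : ∀ B : P.parts, SimpleGraph ↥(B : Finset V)) : SimpleGraph V where
  Adj u v := ∃ (B : P.parts) (hu : u ∈ (B : Finset V)) (hv : v ∈ (B : Finset V)),
      (F B).Adj ⟨u, hu⟩ ⟨v, hv⟩
  symm := ⟨by rintro u v ⟨B, hu, hv, h⟩; exact ⟨B, hv, hu, h.symm⟩⟩
  loopless := ⟨by rintro u ⟨B, hu, hv, h⟩; exact (F B).irrefl h⟩

private lemma reachable_restrict {G : SimpleGraph V} {B : Finset V} {u v : V}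
    (w : G.Walk u v) (hw : ∀ x ∈ w.support, x ∈ B) (hu : u ∈ B) (hv : v ∈ B) :
    (restrict G B).Reachable ⟨u, hu⟩ ⟨v, hv⟩ := by
  induction w with
  | nil => rfl
  | @cons a c d h p ih =>
      have hc : c ∈ B := hw c (by simp)
      have h1 : (restrict G B).Adj ⟨a, hu⟩ ⟨c, hc⟩ := h
      exact h1.reachable.trans (ih (fun x hx => hw x (by simp [hx])) hc hv)

private lemma connected_restrict {G : SimpleGraph V} {P : Finpartition (univ : Finset V)}
    (hP : compPart G = P) {B : Finset V} (hB : B ∈ P.parts) :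
    (restrict G B).Connected := by
  rw [connected_iff]
  have hr : ∀ a b, G.Reachable a b ↔ b ∈ P.part a := compPart_eq_iff.mp hP
  obtain ⟨x, hx⟩ := P.nonempty_of_mem_parts hB
  refine ⟨?_, ⟨⟨x, hx⟩⟩⟩
  rintro ⟨u, hu⟩ ⟨v, hv⟩
  have hBu : P.part u = B := P.part_eq_of_mem hB hu
  have hruv : G.Reachable u v := (hr u v).mpr (by rw [hBu]; exact hv)
  obtain ⟨w⟩ := hruv
  have hw : ∀ x ∈ w.support, x ∈ B := by
    intro x hxs
    have h1 : G.Reachable u x := (w.takeUntil x hxs).reachable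
    have h2 := (hr u x).mp h1
    rwa [hBu] at h2
  exact reachable_restrict w hw hu hv

private lemma compPart_glue (P : Finpartition (univ : Finset V))
    (F : ∀ B : P.parts, SimpleGraph ↥(B : Finset V)) (hF : ∀ B, (F B).Connected) :
    compPart (glue P F) = P := by
  rw [compPart_eq_iff]
  intro a b
  constructor
  · intro h
    obtain ⟨w⟩ := h
    induction w with
    | nil => exact P.mem_part (mem_univ _)
    | @cons u c v h p ih =>
        obtain ⟨B, hu, hc, _⟩ := h
        have h1 : P.part u = (B : Finset V) := P.part_eq_of_mem B.2 hu
        have h2 : P.part c = (B : Finset V) := P.part_eq_of_mem B.2 hc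
        rw [h1, ← h2]
        exact ih
  · intro hb
    have hBmem : P.part a ∈ P.parts := P.part_mem.mpr (mem_univ a)
    have ha : a ∈ ((⟨P.part a, hBmem⟩ : P.parts) : Finset V) := P.mem_part (mem_univ a)
    have hb' : b ∈ ((⟨P.part a, hBmem⟩ : P.parts) : Finset V) := hb
    have hreach := (hF ⟨P.part a, hBmem⟩).preconnected ⟨a, ha⟩ ⟨b, hb'⟩
    exact Reachable.map
      (⟨Subtype.val, by rintro ⟨x, hx⟩ ⟨y, hy⟩ h; exact ⟨⟨P.part a, hBmem⟩, hx, hy, h⟩⟩ :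
        F ⟨P.part a, hBmem⟩ →g glue P F) hreach

private lemma glue_restrict {G : SimpleGraph V} {P : Finpartition (univ : Finset V)}
    (hP : compPart G = P) :
    glue P (fun B => restrict G (B : Finset V)) = G := by
  have hr := compPart_eq_iff.mp hP
  ext u v
  constructor
  · rintro ⟨B, hu, hv, h⟩; exact h
  · intro h
    exact ⟨⟨P.part u, P.part_mem.mpr (mem_univ u)⟩, P.mem_part (mem_univ u),
      (hr u v).mp h.reachable, h⟩

private lemma restrict_glue (P : Finpartition (univ : Finset V))
    (F : ∀ B : P.parts, SimpleGraph ↥(B : Finset V)) (B : P.parts) :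
    restrict (glue P F) (B : Finset V) = F B := by
  ext x y
  constructor
  · rintro ⟨B', hu, hv, h⟩
    have hBB : B' = B := Subtype.ext (P.eq_of_mem_parts B'.2 B.2 hu x.2)
    subst hBB
    exact h
  · intro h
    exact ⟨B, x.2, y.2, h⟩

/-- The key bijection: bipartite graphs whose component partition is `P` correspond to
families of connected bipartite graphs on the parts of `P`. -/
private noncomputable def fiberEquiv (f : V → Bool) (P : Finpartition (univ : Finset V)) :
    {G : SimpleGraph V // (∀ u v, G.Adj u v → f u ≠ f v) ∧ compPart G = P} ≃
      ∀ B : P.parts, {H : SimpleGraph ↥(B : Finset V) //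
        (∀ u v, H.Adj u v → f ↑u ≠ f ↑v) ∧ H.Connected} where
  toFun G B := ⟨restrict G.1 (B : Finset V), fun u v h => G.2.1 _ _ h,
    connected_restrict G.2.2 B.2⟩
  invFun F := ⟨glue P (fun B => (F B).1),
    ⟨by rintro u v ⟨B, hu, hv, h⟩; exact (F B).2.1 _ _ h,
      compPart_glue P _ (fun B => (F B).2.2)⟩⟩
  left_inv G := Subtype.ext (glue_restrict G.2.2)
  right_inv F := funext fun B => Subtype.ext (restrict_glue P _ B)

private lemma nat_card_sigma {ι : Type*} [Fintype ι] (f : ι → Type*) [∀ i, Finite (f i)] :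
    Nat.card (Σ i, f i) = ∑ i, Nat.card (f i) := by
  letI : ∀ i, Fintype (f i) := fun i => Fintype.ofFinite _
  simp [Nat.card_eq_fintype_card, Fintype.card_sigma]

/-- Transport of the graph count along an equivalence compatible with the 2-coloring. -/
private lemma card_graphs_congr {W W' : Type*} (e : W ≃ W') (g : W → Bool) (g' : W' → Bool)
    (hg : ∀ x, g' (e x) = g x) :
    Nat.card {H : SimpleGraph W // (∀ u v, H.Adj u v → g u ≠ g v) ∧ H.Connected} =
      Nat.card {H : SimpleGraph W' // (∀ u v, H.Adj u v → g' u ≠ g' v) ∧ H.Connected} := by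
  apply Nat.card_congr
  refine Equiv.subtypeEquiv
    ⟨fun H => H.comap e.symm, fun H => H.comap e,
      fun H => (by ext u v; simp [SimpleGraph.comap]),
      fun H => (by ext u v; simp [SimpleGraph.comap])⟩ ?_
  intro H
  have hiso : H ≃g (H.comap e.symm : SimpleGraph W') :=
    ⟨e, by intro a b; simp [SimpleGraph.comap]⟩
  constructor
  · rintro ⟨hb, hc⟩
    refine ⟨?_, hiso.connected_iff.mp hc⟩
    intro u v h
    have := hb _ _ h
    rwa [← hg (e.symm u), ← hg (e.symm v), e.apply_symm_apply, e.apply_symm_apply] at this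
  · rintro ⟨hb, hc⟩
    refine ⟨?_, hiso.connected_iff.mpr hc⟩
    intro u v h
    have h' : (H.comap e.symm).Adj (e u) (e v) := by
      simpa [SimpleGraph.comap] using h
    have := hb _ _ h'
    rwa [hg, hg] at this

end Aux

section Block

private def blockSplit {m n : ℕ} (B : Finset (Fin m ⊕ Fin n)) :
    ↥B ≃ (↥(B.filter (fun v => v.isLeft = true)) ⊕ ↥(B.filter (fun v => v.isRight = true))) where
  toFun x :=
    if h : (↑x : Fin m ⊕ Fin n).isLeft = true then
      Sum.inl ⟨↑x, Finset.mem_filter.mpr ⟨x.2, h⟩⟩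
    else
      Sum.inr ⟨↑x, Finset.mem_filter.mpr ⟨x.2, by
        rcases hx : (↑x : Fin m ⊕ Fin n) with _ | _ <;> simp_all⟩⟩
  invFun y := Sum.elim (fun z : ↥(B.filter (fun v => v.isLeft = true)) =>
      (⟨↑z, (Finset.mem_filter.mp z.2).1⟩ : ↥B))
    (fun z : ↥(B.filter (fun v => v.isRight = true)) =>
      (⟨↑z, (Finset.mem_filter.mp z.2).1⟩ : ↥B)) y
  left_inv x := by
    by_cases h : (↑x : Fin m ⊕ Fin n).isLeft = true
    · simp only [dif_pos h, Sum.elim_inl]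
    · simp only [dif_neg h, Sum.elim_inr]
  right_inv y := by
    rcases y with z | z
    · have h : (↑z : Fin m ⊕ Fin n).isLeft = true := (Finset.mem_filter.mp z.2).2
      simp [Sum.elim_inl, dif_pos h]
    · have h : (↑z : Fin m ⊕ Fin n).isRight = true := (Finset.mem_filter.mp z.2).2
      have h' : ¬ (↑z : Fin m ⊕ Fin n).isLeft = true := by
        rcases hz : (↑z : Fin m ⊕ Fin n) with _ | _ <;> simp_all
      simp [Sum.elim_inr, dif_neg h']

private noncomputable def blockEquiv {m n : ℕ} (B : Finset (Fin m ⊕ Fin n)) :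
    ↥B ≃ (Fin (B.filter (fun v => v.isLeft = true)).card ⊕
        Fin (B.filter (fun v => v.isRight = true)).card) :=
  (blockSplit B).trans (Equiv.sumCongr
    (Fintype.equivFinOfCardEq (Fintype.card_coe _))
    (Fintype.equivFinOfCardEq (Fintype.card_coe _)))

private lemma blockEquiv_isLeft {m n : ℕ} (B : Finset (Fin m ⊕ Fin n)) (x : ↥B) :
    (blockEquiv B x).isLeft = (↑x : Fin m ⊕ Fin n).isLeft := by
  unfold blockEquiv blockSplit
  by_cases h : (↑x : Fin m ⊕ Fin n).isLeft = true <;>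
    simp [h, Equiv.sumCongr]

private lemma card_block {m n : ℕ} (B : Finset (Fin m ⊕ Fin n)) :
    Nat.card {H : SimpleGraph ↥B //
        (∀ u v, H.Adj u v → (↑u : Fin m ⊕ Fin n).isLeft ≠ (↑v : Fin m ⊕ Fin n).isLeft) ∧
          H.Connected} =
      connBipartiteCount (B.filter (fun v => v.isLeft = true)).card
        (B.filter (fun v => v.isRight = true)).card := by
  unfold connBipartiteCount
  exact card_graphs_congr (blockEquiv B) (fun x => (↑x : Fin m ⊕ Fin n).isLeft)
    (fun u => u.isLeft) (fun x => blockEquiv_isLeft B x)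

end Block

section Count

private def mkBip {m n : ℕ} (r : Fin m × Fin n → Prop) : SimpleGraph (Fin m ⊕ Fin n) where
  Adj u v :=
    (∃ i j, u = Sum.inl i ∧ v = Sum.inr j ∧ r (i, j)) ∨
      (∃ i j, u = Sum.inr j ∧ v = Sum.inl i ∧ r (i, j))
  symm := ⟨by
    rintro u v (⟨i, j, rfl, rfl, h⟩ | ⟨i, j, rfl, rfl, h⟩)
    · exact Or.inr ⟨i, j, rfl, rfl, h⟩
    · exact Or.inl ⟨i, j, rfl, rfl, h⟩⟩
  loopless := ⟨by
    rintro u (⟨i, j, h1, h2, _⟩ | ⟨i, j, h1, h2, _⟩) <;> subst h1 <;> simp at h2⟩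

private def bipEquiv (m n : ℕ) :
    {G : SimpleGraph (Fin m ⊕ Fin n) //
        ∀ u v : Fin m ⊕ Fin n, G.Adj u v → u.isLeft ≠ v.isLeft} ≃
      (Fin m × Fin n → Prop) where
  toFun G p := G.1.Adj (.inl p.1) (.inr p.2)
  invFun r := ⟨mkBip r,
    by rintro u v (⟨i, j, rfl, rfl, h⟩ | ⟨i, j, rfl, rfl, h⟩) <;> simp⟩
  left_inv G := by
    apply Subtype.ext
    ext u v
    constructor
    · rintro (⟨i, j, rfl, rfl, h⟩ | ⟨i, j, rfl, rfl, h⟩)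
      · exact h
      · exact h.symm
    · intro h
      match u, v with
      | .inl i, .inl i' => exact absurd (G.2 _ _ h) (by simp)
      | .inl i, .inr j => exact Or.inl ⟨i, j, rfl, rfl, h⟩
      | .inr j, .inl i => exact Or.inr ⟨i, j, rfl, rfl, h.symm⟩
      | .inr j, .inr j' => exact absurd (G.2 _ _ h) (by simp)
  right_inv r := by
    funext p
    apply propext
    constructor
    · rintro (⟨i, j, hi, hj, h⟩ | ⟨i, j, hi, hj, h⟩)
      · obtain rfl : p.1 = i := Sum.inl.inj hi
        obtain rfl : p.2 = j := Sum.inr.inj hj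
        exact h
      · exact absurd hi (by simp)
    · intro h
      exact Or.inl ⟨p.1, p.2, rfl, rfl, h⟩

/-- **Counting bipartite graphs by connected components.**
For all `m, n ≥ 0`, `2^{mn} = ∑_P ∏_{B ∈ P} Conn(#(B ∩ X), #(B ∩ Y))`, where the sum is
over all partitions `P` of `X ∪ Y` (with `X, Y` the two summands of `Fin m ⊕ Fin n`)
into nonempty blocks. -/
theorem two_pow_eq_sum_partitions_prod_conn (m n : ℕ) :
    2 ^ (m * n) =
      ∑ P : Finpartition (Finset.univ : Finset (Fin m ⊕ Fin n)),
        ∏ B ∈ P.parts,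
          connBipartiteCount (B.filter (fun v => v.isLeft = true)).card
            (B.filter (fun v => v.isRight = true)).card := by
  classical
  set V := Fin m ⊕ Fin n
  set S := {G : SimpleGraph V // ∀ u v : V, G.Adj u v → u.isLeft ≠ v.isLeft}
  have h1 : Nat.card S = 2 ^ (m * n) := by
    rw [Nat.card_congr (bipEquiv m n), Nat.card_fun]
    have hp : Nat.card Prop = 2 := by
      rw [Nat.card_eq_fintype_card]
      rfl
    rw [hp]
    simp [Nat.card_eq_fintype_card]
  have h2 : Nat.card S =
      ∑ P : Finpartition (Finset.univ : Finset V),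
        ∏ B ∈ P.parts,
          connBipartiteCount (B.filter (fun v => v.isLeft = true)).card
            (B.filter (fun v => v.isRight = true)).card := by
    have e1 : Nat.card S =
        ∑ P : Finpartition (Finset.univ : Finset V),
          Nat.card {G : S // compPart G.1 = P} := by
      rw [Nat.card_congr (Equiv.sigmaFiberEquiv (fun G : S => compPart G.1)).symm,
        nat_card_sigma]
    rw [e1]
    apply Finset.sum_congr rfl
    intro P _
    have e2 : Nat.card {G : S // compPart G.1 = P} =
        Nat.card {G : SimpleGraph V //
          (∀ u v : V, G.Adj u v → u.isLeft ≠ v.isLeft) ∧ compPart G = P} :=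
      Nat.card_congr (Equiv.subtypeSubtypeEquivSubtypeInter
        (fun G : SimpleGraph V => ∀ u v : V, G.Adj u v → u.isLeft ≠ v.isLeft)
        (fun G => compPart G = P))
    rw [e2, Nat.card_congr (fiberEquiv (fun v : V => v.isLeft) P), Nat.card_pi,
      ← Finset.prod_coe_sort P.parts (fun B =>
        connBipartiteCount ((B.filter (fun v => v.isLeft = true)).card)
          ((B.filter (fun v => v.isRight = true)).card))]
    exact Finset.prod_congr rfl fun B _ => card_block (B : Finset V)
  rw [← h1, h2]

end Count
end

section
/- For every m ≥ 0 there exist integers a_{m,1}, …, a_{m,m+1} (independent of n) such that for all n ≥ 0, the number of compositions of the complete bipartite graph satisfies C(K_{m,n}) = Σ_{i=1}^{m+1} a_{m,i} · i^n. -/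
/-- `compCount G` is the number of compositions of the finite simple graph `G`, i.e. the
number of partitions of its vertex set into nonempty blocks each of which induces a
connected subgraph of `G`. -/
noncomputable def compCount {V : Type*} [Fintype V] [DecidableEq V] (G : SimpleGraph V) : ℕ :=
  Nat.card {P : Finpartition (Finset.univ : Finset V) //
    ∀ B ∈ P.parts, (G.induce (↑B : Set V)).Connected}


open Finset

lemma count_into (n : ℕ) {γ : Type*} [Fintype γ] [DecidableEq γ] (u : Finset γ) :
    (Finset.univ.filter (fun f : Fin n → γ => ∀ j, f j ∈ u)).card = u.card ^ n := by
  rw [← Fintype.card_subtype]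
  have e : { f : Fin n → γ // ∀ j, f j ∈ u } ≃ (Fin n → {x // x ∈ u}) :=
    { toFun := fun f j => ⟨f.1 j, f.2 j⟩
      invFun := fun g => ⟨fun j => (g j).1, fun j => (g j).2⟩
      left_inv := fun f => rfl
      right_inv := fun g => rfl }
  rw [Fintype.card_congr e, Fintype.card_fun]
  simp

lemma count_fun (n : ℕ) {γ : Type*} [Fintype γ] [DecidableEq γ] :
    ∀ (s u : Finset γ), s ⊆ u →
    ((Finset.univ.filter
        (fun f : Fin n → γ => (∀ j, f j ∈ u) ∧ ∀ x ∈ s, ∃ j, f j = x)).card : ℤ)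
      = ∑ t ∈ s.powerset, (-1) ^ t.card * ((u.card : ℤ) - t.card) ^ n := by
  intro s
  induction s using Finset.induction with
  | empty =>
    intro u _
    simp only [notMem_empty, false_implies, implies_true, and_true, powerset_empty,
      sum_singleton, card_empty, pow_zero, one_mul, Nat.cast_zero, sub_zero]
    rw [count_into]
    push_cast
    ring
  | @insert x s hx ih =>
    intro u hsu
    have hxu : x ∈ u := hsu (mem_insert_self x s)
    have hsu' : s ⊆ u := (subset_insert x s).trans hsu
    have hse : s ⊆ u.erase x := fun y hy =>
      mem_erase.2 ⟨fun h => hx (h ▸ hy), hsu' hy⟩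
    -- set identity
    have key : Finset.univ.filter
        (fun f : Fin n → γ => (∀ j, f j ∈ u) ∧ ∀ y ∈ insert x s, ∃ j, f j = y)
        = (Finset.univ.filter
            (fun f : Fin n → γ => (∀ j, f j ∈ u) ∧ ∀ y ∈ s, ∃ j, f j = y))
          \ (Finset.univ.filter
            (fun f : Fin n → γ => (∀ j, f j ∈ u.erase x) ∧ ∀ y ∈ s, ∃ j, f j = y)) := by
      ext f
      simp only [mem_sdiff, mem_filter, mem_univ, true_and, mem_insert, mem_erase]
      constructor
      · rintro ⟨h1, h2⟩
        refine ⟨⟨h1, fun y hy => h2 y (Or.inr hy)⟩, ?_⟩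
        rintro ⟨h3, -⟩
        obtain ⟨j, hj⟩ := h2 x (Or.inl rfl)
        exact (h3 j).1 hj
      · rintro ⟨⟨h1, h2⟩, h3⟩
        refine ⟨h1, fun y hy => ?_⟩
        rcases hy with rfl | hy
        · by_contra hc
          push_neg at hc
          exact h3 ⟨fun j => ⟨fun h => hc j h, h1 j⟩, h2⟩
        · exact h2 y hy
    have hsub : (Finset.univ.filter
            (fun f : Fin n → γ => (∀ j, f j ∈ u.erase x) ∧ ∀ y ∈ s, ∃ j, f j = y))
          ⊆ (Finset.univ.filter
            (fun f : Fin n → γ => (∀ j, f j ∈ u) ∧ ∀ y ∈ s, ∃ j, f j = y)) := by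
      intro f hf
      simp only [mem_filter, mem_univ, true_and] at hf ⊢
      exact ⟨fun j => (mem_erase.1 (hf.1 j)).2, hf.2⟩
    rw [key, card_sdiff_of_subset hsub]
    rw [Nat.cast_sub (card_le_card hsub)]
    rw [ih u hsu', ih (u.erase x) hse]
    rw [sum_powerset_insert hx]
    rw [card_erase_of_mem hxu]
    have hcu : 1 ≤ u.card := card_pos.2 ⟨x, hxu⟩
    rw [sub_eq_add_neg, ← Finset.sum_neg_distrib]
    congr 1
    apply Finset.sum_congr rfl
    intro t ht
    have hxt : x ∉ t := fun h => hx (mem_powerset.1 ht h)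
    rw [card_insert_of_notMem hxt]
    push_cast [Nat.cast_sub hcu]
    ring
open Finset

variable {α : Type*} [Fintype α] [DecidableEq α]

/-- The kernel setoid of a function, with decidable relation. -/
def kerSetoid {β : Type*} [DecidableEq β] (g : α → β) : Setoid α where
  r a b := g a = g b
  iseqv := ⟨fun _ => rfl, Eq.symm, Eq.trans⟩

instance {β : Type*} [DecidableEq β] (g : α → β) : DecidableRel (kerSetoid g).r :=
  fun a b => inferInstanceAs (Decidable (g a = g b))

lemma part_ofSetoid_ker {β : Type*} [DecidableEq β] (g : α → β) (a : α) :
    (Finpartition.ofSetoid (kerSetoid g)).part a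
      = Finset.univ.filter (fun b => g b = g a) := by
  ext b
  rw [Finpartition.mem_part_ofSetoid_iff_rel]
  simp only [mem_filter, mem_univ, true_and]
  exact ⟨Eq.symm, Eq.symm⟩

lemma parts_eq_image_part (P : Finpartition (Finset.univ : Finset α)) :
    P.parts = Finset.univ.image P.part := by
  apply Finset.Subset.antisymm
  · intro t ht
    obtain ⟨a, _, ha⟩ := P.part_surjOn ht
    exact mem_image.2 ⟨a, mem_univ a, ha⟩
  · intro t ht
    obtain ⟨a, _, rfl⟩ := mem_image.1 ht
    exact P.part_mem.2 (mem_univ a)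

lemma ofSetoid_congr (s s' : Setoid α) [DecidableRel s.r] [DecidableRel s'.r]
    (h : ∀ a b, s.r a b ↔ s'.r a b) :
    Finpartition.ofSetoid s = Finpartition.ofSetoid s' := by
  ext1
  show Finset.univ.image _ = Finset.univ.image _
  apply Finset.image_congr
  intro a _
  ext b
  simpa using h a b

/-- Reconstruction: a finpartition of `univ` is the partition induced by the kernel of
its `part` function. -/
lemma ofSetoid_ker_part (P : Finpartition (Finset.univ : Finset α)) :
    Finpartition.ofSetoid (kerSetoid P.part) = P := by
  ext1
  rw [parts_eq_image_part (Finpartition.ofSetoid (kerSetoid P.part)),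
    parts_eq_image_part P]
  apply Finset.image_congr
  intro a _
  rw [part_ofSetoid_ker]
  ext b
  simp only [mem_filter, mem_univ, true_and]
  exact (P.mem_part_iff_part_eq_part (mem_univ b) (mem_univ a)).symm

lemma part_eq_part_iff_ker {β : Type*} [DecidableEq β] (g : α → β) (a b : α) :
    (Finpartition.ofSetoid (kerSetoid g)).part a
      = (Finpartition.ofSetoid (kerSetoid g)).part b ↔ g a = g b := by
  rw [part_ofSetoid_ker, part_ofSetoid_ker]
  constructor
  · intro h
    have h2 : a ∈ Finset.univ.filter (fun c => g c = g b) := by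
      rw [← h]; simp
    simpa using h2
  · intro h
    ext c
    simp [h]
open Finset

variable {m n : ℕ}

abbrev KG (m n : ℕ) := completeBipartiteGraph (Fin m) (Fin n)

lemma kg_adj {x y : Fin m ⊕ Fin n} :
    (KG m n).Adj x y ↔ (x.isLeft ∧ y.isRight ∨ x.isRight ∧ y.isLeft) := Iff.rfl

lemma conn_of_both {B : Finset (Fin m ⊕ Fin n)}
    (hl : ∃ a, Sum.inl a ∈ B) (hr : ∃ b, Sum.inr b ∈ B) :
    ((KG m n).induce (↑B : Set (Fin m ⊕ Fin n))).Connected := by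
  obtain ⟨a₀, ha₀⟩ := hl
  obtain ⟨b₀, hb₀⟩ := hr
  rw [SimpleGraph.connected_iff]
  constructor
  · intro x y
    have adj_lr : ∀ (a : Fin m) (b : Fin n) (ha : Sum.inl a ∈ B) (hb : Sum.inr b ∈ B),
        ((KG m n).induce (↑B : Set (Fin m ⊕ Fin n))).Adj
          ⟨Sum.inl a, ha⟩ ⟨Sum.inr b, hb⟩ := by
      intro a b ha hb
      exact Or.inl ⟨rfl, rfl⟩
    have reach_pivot : ∀ (v : ↑(↑B : Set (Fin m ⊕ Fin n))),
        ((KG m n).induce (↑B : Set (Fin m ⊕ Fin n))).Reachable v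
          ⟨Sum.inr b₀, hb₀⟩ := by
      rintro ⟨v, hv⟩
      match v with
      | Sum.inl a => exact (adj_lr a b₀ hv hb₀).reachable
      | Sum.inr b =>
        exact ((adj_lr a₀ b ha₀ hv).symm.reachable).trans
          (adj_lr a₀ b₀ ha₀ hb₀).reachable
    exact (reach_pivot x).trans (reach_pivot y).symm
  · exact ⟨⟨Sum.inl a₀, ha₀⟩⟩

lemma conn_singleton (v : Fin m ⊕ Fin n) :
    ((KG m n).induce (↑({v} : Finset (Fin m ⊕ Fin n)) : Set (Fin m ⊕ Fin n))).Connected := by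
  rw [SimpleGraph.connected_iff]
  refine ⟨fun x y => ?_, ⟨⟨v, by simp⟩⟩⟩
  have : x = y := by
    ext1
    have hx := x.2
    have hy := y.2
    simp only [coe_singleton, Set.mem_singleton_iff] at hx hy
    rw [hx, hy]
  rw [this]

lemma both_sides_of_conn {B : Finset (Fin m ⊕ Fin n)}
    (hB : ((KG m n).induce (↑B : Set (Fin m ⊕ Fin n))).Connected)
    {x y : Fin m ⊕ Fin n} (hx : x ∈ B) (hy : y ∈ B) (hxy : x ≠ y) :
    (∃ a, Sum.inl a ∈ B) ∧ ∃ b, Sum.inr b ∈ B := by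
  obtain ⟨w⟩ := hB.preconnected ⟨x, hx⟩ ⟨y, hy⟩
  cases w with
  | nil => exact absurd rfl hxy
  | @cons _ z _ h p =>
    have hz := z.2
    have hadj : (KG m n).Adj x z.1 := h
    rcases hadj with ⟨hxl, hzr⟩ | ⟨hxr, hzl⟩
    · obtain ⟨a, rfl⟩ := Sum.isLeft_iff.1 hxl
      obtain ⟨b, hb⟩ := Sum.isRight_iff.1 hzr
      exact ⟨⟨a, hx⟩, ⟨b, by rw [← hb]; exact hz⟩⟩
    · obtain ⟨b, rfl⟩ := Sum.isRight_iff.1 hxr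
      obtain ⟨a, ha⟩ := Sum.isLeft_iff.1 hzl
      exact ⟨⟨a, by rw [← ha]; exact hz⟩, ⟨b, hx⟩⟩

section Bij

variable {m n : ℕ}

/-- Left trace of a block. -/
def lt (B : Finset (Fin m ⊕ Fin n)) : Finset (Fin m) :=
  Finset.univ.filter (fun l => Sum.inl l ∈ B)

@[simp] lemma mem_lt {B : Finset (Fin m ⊕ Fin n)} {l : Fin m} :
    l ∈ lt B ↔ Sum.inl l ∈ B := by simp [lt]

/-- The partition of the left side induced by a partition of the whole vertex set. -/
def LQ (P : Finpartition (Finset.univ : Finset (Fin m ⊕ Fin n))) :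
    Finpartition (Finset.univ : Finset (Fin m)) :=
  Finpartition.ofSetoid (kerSetoid (fun l : Fin m => P.part (Sum.inl l)))

/-- The assignment of right vertices. -/
noncomputable def ff (P : Finpartition (Finset.univ : Finset (Fin m ⊕ Fin n))) :
    Fin n → Option (Finset (Fin m)) :=
  fun j => if (lt (P.part (Sum.inr j))).Nonempty then some (lt (P.part (Sum.inr j))) else none

/-- The coloring function from `(Q, f)` data. -/
def gg (Q : Finpartition (Finset.univ : Finset (Fin m)))
    (f : Fin n → Option (Finset (Fin m))) :
    (Fin m ⊕ Fin n) → (Finset (Fin m) ⊕ Fin n) :=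
  Sum.elim (fun l => Sum.inl (Q.part l)) (fun j => (f j).elim (Sum.inr j) Sum.inl)

/-- The partition built from `(Q, f)` data. -/
def BP (Q : Finpartition (Finset.univ : Finset (Fin m)))
    (f : Fin n → Option (Finset (Fin m))) :
    Finpartition (Finset.univ : Finset (Fin m ⊕ Fin n)) :=
  Finpartition.ofSetoid (kerSetoid (gg Q f))

lemma LQ_part (P : Finpartition (Finset.univ : Finset (Fin m ⊕ Fin n))) (l : Fin m) :
    (LQ P).part l = lt (P.part (Sum.inl l)) := by
  ext b
  rw [LQ, part_ofSetoid_ker]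
  simp only [mem_filter, mem_univ, true_and, mem_lt]
  rw [P.mem_part_iff_part_eq_part (mem_univ (Sum.inl b)) (mem_univ (Sum.inl l))]

lemma BP_part (Q : Finpartition (Finset.univ : Finset (Fin m)))
    (f : Fin n → Option (Finset (Fin m))) (v : Fin m ⊕ Fin n) :
    (BP Q f).part v = Finset.univ.filter (fun w => gg Q f w = gg Q f v) :=
  part_ofSetoid_ker _ _

lemma mem_BP_part {Q : Finpartition (Finset.univ : Finset (Fin m))}
    {f : Fin n → Option (Finset (Fin m))} {v w : Fin m ⊕ Fin n} :
    w ∈ (BP Q f).part v ↔ gg Q f w = gg Q f v := by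
  rw [BP_part]; simp


/-- Condition on the pair `(Q, f)`. -/
def Cond (Q : Finpartition (Finset.univ : Finset (Fin m)))
    (f : Fin n → Option (Finset (Fin m))) : Prop :=
  (∀ j B, f j = some B → B ∈ Q.parts) ∧
    (∀ B ∈ Q.parts, 2 ≤ B.card → ∃ j, f j = some B)

lemma conn_parts (P : Finpartition (Finset.univ : Finset (Fin m ⊕ Fin n)))
    (hP : ∀ B ∈ P.parts, ((KG m n).induce (↑B : Set (Fin m ⊕ Fin n))).Connected)
    (v : Fin m ⊕ Fin n) :
    ((KG m n).induce (↑(P.part v) : Set (Fin m ⊕ Fin n))).Connected :=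
  hP _ (P.part_mem.2 (mem_univ v))

lemma part_eq_singleton_of_no_left
    (P : Finpartition (Finset.univ : Finset (Fin m ⊕ Fin n)))
    (hP : ∀ B ∈ P.parts, ((KG m n).induce (↑B : Set (Fin m ⊕ Fin n))).Connected)
    (j : Fin n) (h : ¬ (lt (P.part (Sum.inr j))).Nonempty) :
    P.part (Sum.inr j) = {Sum.inr j} := by
  rw [Finset.eq_singleton_iff_unique_mem]
  refine ⟨P.mem_part (mem_univ _), fun w hw => ?_⟩
  by_contra hne
  obtain ⟨⟨a, ha⟩, -⟩ :=
    both_sides_of_conn (conn_parts P hP (Sum.inr j)) hw (P.mem_part (mem_univ _)) hne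
  exact h ⟨a, mem_lt.2 ha⟩

lemma toFun_cond (P : Finpartition (Finset.univ : Finset (Fin m ⊕ Fin n)))
    (hP : ∀ B ∈ P.parts, ((KG m n).induce (↑B : Set (Fin m ⊕ Fin n))).Connected) :
    Cond (LQ P) (ff P) := by
  constructor
  · intro j B hjB
    rw [ff] at hjB
    split at hjB
    · rename_i hne
      have hB : B = lt (P.part (Sum.inr j)) := (Option.some_injective _ hjB).symm
      obtain ⟨l, hl⟩ := hne
      have hl' : Sum.inl l ∈ P.part (Sum.inr j) := mem_lt.1 hl
      have hpart : P.part (Sum.inl l) = P.part (Sum.inr j) :=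
        P.part_eq_of_mem (P.part_mem.2 (mem_univ _)) hl'
      have : B = (LQ P).part l := by rw [hB, LQ_part, hpart]
      rw [this]
      exact (LQ P).part_mem.2 (mem_univ l)
    · exact absurd hjB (by simp)
  · intro B hB hcard
    rw [parts_eq_image_part] at hB
    obtain ⟨l, -, rfl⟩ := mem_image.1 hB
    rw [LQ_part] at hcard ⊢
    obtain ⟨l₁, hl₁, l₂, hl₂, hne⟩ := Finset.one_lt_card.1 hcard
    have h₁ : Sum.inl l₁ ∈ P.part (Sum.inl l) := mem_lt.1 hl₁
    have h₂ : Sum.inl l₂ ∈ P.part (Sum.inl l) := mem_lt.1 hl₂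
    obtain ⟨-, b, hb⟩ := both_sides_of_conn (conn_parts P hP (Sum.inl l)) h₁ h₂
      (fun h => hne (Sum.inl_injective h))
    refine ⟨b, ?_⟩
    have hpart : P.part (Sum.inr b) = P.part (Sum.inl l) :=
      P.part_eq_of_mem (P.part_mem.2 (mem_univ _)) hb
    rw [ff, hpart, if_pos ⟨l₁, hl₁⟩]

lemma gg_inl (Q : Finpartition (Finset.univ : Finset (Fin m)))
    (f : Fin n → Option (Finset (Fin m))) (l : Fin m) :
    gg Q f (Sum.inl l) = Sum.inl (Q.part l) := rfl

lemma gg_inr_some {Q : Finpartition (Finset.univ : Finset (Fin m))}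
    {f : Fin n → Option (Finset (Fin m))} {j : Fin n} {B : Finset (Fin m)}
    (h : f j = some B) : gg Q f (Sum.inr j) = Sum.inl B := by
  simp [gg, h]

lemma gg_inr_none {Q : Finpartition (Finset.univ : Finset (Fin m))}
    {f : Fin n → Option (Finset (Fin m))} {j : Fin n}
    (h : f j = none) : gg Q f (Sum.inr j) = Sum.inr j := by
  simp [gg, h]

lemma BP_conn (Q : Finpartition (Finset.univ : Finset (Fin m)))
    (f : Fin n → Option (Finset (Fin m))) (hc : Cond Q f) :
    ∀ B ∈ (BP Q f).parts, ((KG m n).induce (↑B : Set (Fin m ⊕ Fin n))).Connected := by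
  intro B hB
  rw [parts_eq_image_part] at hB
  obtain ⟨v, -, rfl⟩ := mem_image.1 hB
  match v with
  | Sum.inl l =>
    by_cases hj : ∃ j, f j = some (Q.part l)
    · obtain ⟨j, hj⟩ := hj
      refine conn_of_both ⟨l, (BP Q f).mem_part (mem_univ _)⟩ ⟨j, ?_⟩
      rw [mem_BP_part, gg_inr_some hj, gg_inl]
    · have : (BP Q f).part (Sum.inl l) = {Sum.inl l} := by
        rw [Finset.eq_singleton_iff_unique_mem]
        refine ⟨(BP Q f).mem_part (mem_univ _), fun w hw => ?_⟩
        rw [mem_BP_part, gg_inl] at hw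
        match w with
        | Sum.inl l' =>
          rw [gg_inl] at hw
          have hQ : Q.part l' = Q.part l := Sum.inl_injective hw
          by_contra hne
          have hne' : l' ≠ l := fun h => hne (by rw [h])
          have h2 : 2 ≤ (Q.part l).card := by
            apply Finset.one_lt_card.2
            exact ⟨l', hQ ▸ Q.mem_part (mem_univ l'), l, Q.mem_part (mem_univ l), hne'⟩
          obtain ⟨j', hj'⟩ := hc.2 _ (Q.part_mem.2 (mem_univ l)) h2
          exact hj ⟨j', hj'⟩
        | Sum.inr j =>
          cases hfj : f j with
          | none => rw [gg_inr_none hfj] at hw; exact absurd hw (by simp)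
          | some B' =>
            rw [gg_inr_some hfj] at hw
            have : B' = Q.part l := Sum.inl_injective hw
            exact absurd ⟨j, this ▸ hfj⟩ hj
      rw [this]
      exact conn_singleton _
  | Sum.inr j =>
    cases hfj : f j with
    | some B' =>
      have hB' : B' ∈ Q.parts := hc.1 j B' hfj
      obtain ⟨l₀, hl₀⟩ := Q.nonempty_of_mem_parts hB'
      refine conn_of_both ⟨l₀, ?_⟩ ⟨j, (BP Q f).mem_part (mem_univ _)⟩
      rw [mem_BP_part, gg_inl, gg_inr_some hfj, Q.part_eq_of_mem hB' hl₀]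
    | none =>
      have : (BP Q f).part (Sum.inr j) = {Sum.inr j} := by
        rw [Finset.eq_singleton_iff_unique_mem]
        refine ⟨(BP Q f).mem_part (mem_univ _), fun w hw => ?_⟩
        rw [mem_BP_part, gg_inr_none hfj] at hw
        match w with
        | Sum.inl l' => rw [gg_inl] at hw; exact absurd hw (by simp)
        | Sum.inr j' =>
          cases hfj' : f j' with
          | some B' => rw [gg_inr_some hfj'] at hw; exact absurd hw (by simp)
          | none => rw [gg_inr_none hfj'] at hw; exact congrArg Sum.inr (Sum.inr_injective hw)
      rw [this]
      exact conn_singleton _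

lemma lt_part_eq_iff (P : Finpartition (Finset.univ : Finset (Fin m ⊕ Fin n)))
    {v w : Fin m ⊕ Fin n} (hv : (lt (P.part v)).Nonempty) :
    lt (P.part v) = lt (P.part w) ↔ P.part v = P.part w := by
  constructor
  · intro h
    obtain ⟨l, hl⟩ := hv
    have hl' : l ∈ lt (P.part w) := h ▸ hl
    exact P.eq_of_mem_parts (P.part_mem.2 (mem_univ v)) (P.part_mem.2 (mem_univ w))
      (mem_lt.1 hl) (mem_lt.1 hl')
  · intro h; rw [h]

lemma lt_inl_nonempty (P : Finpartition (Finset.univ : Finset (Fin m ⊕ Fin n)))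
    (l : Fin m) : (lt (P.part (Sum.inl l))).Nonempty :=
  ⟨l, mem_lt.2 (P.mem_part (mem_univ _))⟩

lemma gP_inl (P : Finpartition (Finset.univ : Finset (Fin m ⊕ Fin n))) (l : Fin m) :
    gg (LQ P) (ff P) (Sum.inl l) = Sum.inl (lt (P.part (Sum.inl l))) := by
  rw [gg_inl, LQ_part]

lemma gP_inr_pos (P : Finpartition (Finset.univ : Finset (Fin m ⊕ Fin n))) {j : Fin n}
    (h : (lt (P.part (Sum.inr j))).Nonempty) :
    gg (LQ P) (ff P) (Sum.inr j) = Sum.inl (lt (P.part (Sum.inr j))) :=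
  gg_inr_some (by rw [ff, if_pos h])

lemma gP_inr_neg (P : Finpartition (Finset.univ : Finset (Fin m ⊕ Fin n))) {j : Fin n}
    (h : ¬ (lt (P.part (Sum.inr j))).Nonempty) :
    gg (LQ P) (ff P) (Sum.inr j) = Sum.inr j :=
  gg_inr_none (by rw [ff, if_neg h])

lemma left_rel (P : Finpartition (Finset.univ : Finset (Fin m ⊕ Fin n)))
    (hP : ∀ B ∈ P.parts, ((KG m n).induce (↑B : Set (Fin m ⊕ Fin n))).Connected)
    (v w : Fin m ⊕ Fin n) :
    gg (LQ P) (ff P) v = gg (LQ P) (ff P) w ↔ P.part v = P.part w := by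
  have key : ∀ (v w : Fin m ⊕ Fin n), (lt (P.part v)).Nonempty →
      (Sum.inl (lt (P.part v)) = gg (LQ P) (ff P) w ↔ P.part v = P.part w) := by
    intro v w hv
    match w with
    | Sum.inl l' =>
      rw [gP_inl]
      rw [← lt_part_eq_iff P hv]
      exact ⟨fun h => Sum.inl_injective h, fun h => congrArg _ h⟩
    | Sum.inr j' =>
      by_cases hw : (lt (P.part (Sum.inr j'))).Nonempty
      · rw [gP_inr_pos P hw, ← lt_part_eq_iff P hv]
        exact ⟨fun h => Sum.inl_injective h, fun h => congrArg _ h⟩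
      · rw [gP_inr_neg P hw]
        constructor
        · intro h; exact absurd h (by simp)
        · intro h
          exact absurd (h ▸ hv) hw
  match v with
  | Sum.inl l => rw [gP_inl]; exact key _ _ (lt_inl_nonempty P l)
  | Sum.inr j =>
    by_cases hv : (lt (P.part (Sum.inr j))).Nonempty
    · rw [gP_inr_pos P hv]; exact key _ _ hv
    · rw [gP_inr_neg P hv]
      match w with
      | Sum.inl l' =>
        rw [gP_inl]
        constructor
        · intro h; exact absurd h (by simp)
        · intro h
          exact absurd (h.symm ▸ lt_inl_nonempty P l') hv
      | Sum.inr j' =>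
        by_cases hw : (lt (P.part (Sum.inr j'))).Nonempty
        · rw [gP_inr_pos P hw]
          constructor
          · intro h; exact absurd h (by simp)
          · intro h
            exact absurd (h ▸ hw) hv  -- careful direction
        · rw [gP_inr_neg P hw]
          rw [part_eq_singleton_of_no_left P hP j hv, part_eq_singleton_of_no_left P hP j' hw]
          constructor
          · intro h; rw [Sum.inr_injective h]
          · intro h
            simpa using h

lemma left_inv_eq (P : Finpartition (Finset.univ : Finset (Fin m ⊕ Fin n)))
    (hP : ∀ B ∈ P.parts, ((KG m n).induce (↑B : Set (Fin m ⊕ Fin n))).Connected) :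
    BP (LQ P) (ff P) = P := by
  rw [BP]
  conv_rhs => rw [← ofSetoid_ker_part P]
  exact ofSetoid_congr _ _ (left_rel P hP)

lemma right_inv_Q (Q : Finpartition (Finset.univ : Finset (Fin m)))
    (f : Fin n → Option (Finset (Fin m))) :
    LQ (BP Q f) = Q := by
  rw [LQ]
  conv_rhs => rw [← ofSetoid_ker_part Q]
  apply ofSetoid_congr
  intro a b
  show (BP Q f).part (Sum.inl a) = (BP Q f).part (Sum.inl b) ↔ Q.part a = Q.part b
  rw [BP, part_eq_part_iff_ker, gg_inl, gg_inl]
  exact ⟨fun h => Sum.inl_injective h, fun h => congrArg _ h⟩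

lemma right_inv_f (Q : Finpartition (Finset.univ : Finset (Fin m)))
    (f : Fin n → Option (Finset (Fin m))) (hc : Cond Q f) :
    ff (BP Q f) = f := by
  funext j
  cases hfj : f j with
  | some B =>
    have hB : B ∈ Q.parts := hc.1 j B hfj
    have hlt : lt ((BP Q f).part (Sum.inr j)) = B := by
      ext l'
      rw [mem_lt, mem_BP_part, gg_inl, gg_inr_some hfj]
      constructor
      · intro h
        have : Q.part l' = B := Sum.inl_injective h
        exact this ▸ Q.mem_part (mem_univ l')
      · intro h
        rw [Q.part_eq_of_mem hB h]
    rw [ff, hlt, if_pos (Q.nonempty_of_mem_parts hB)]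
  | none =>
    have hlt : lt ((BP Q f).part (Sum.inr j)) = ∅ := by
      ext l'
      rw [mem_lt, mem_BP_part, gg_inl, gg_inr_none hfj]
      simp
    rw [ff, hlt]
    simp

noncomputable def mainEquiv (m n : ℕ) :
    {P : Finpartition (Finset.univ : Finset (Fin m ⊕ Fin n)) //
        ∀ B ∈ P.parts, ((KG m n).induce (↑B : Set (Fin m ⊕ Fin n))).Connected}
      ≃ {Qf : Finpartition (Finset.univ : Finset (Fin m))
            × (Fin n → Option (Finset (Fin m))) // Cond Qf.1 Qf.2} where
  toFun P := ⟨(LQ P.1, ff P.1), toFun_cond P.1 P.2⟩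
  invFun Qf := ⟨BP Qf.1.1 Qf.1.2, BP_conn _ _ Qf.2⟩
  left_inv P := Subtype.ext (left_inv_eq P.1 P.2)
  right_inv Qf := Subtype.ext (Prod.ext (right_inv_Q _ _) (right_inv_f _ _ Qf.2))

lemma card_cond_fiber (m n : ℕ) (Q : Finpartition (Finset.univ : Finset (Fin m))) :
    (Nat.card {f : Fin n → Option (Finset (Fin m)) // Cond Q f} : ℤ)
      = ∑ t ∈ ((Q.parts.filter fun B => 2 ≤ B.card).image Option.some).powerset,
          (-1) ^ t.card * ((Q.parts.card : ℤ) + 1 - t.card) ^ n := by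
  classical
  set u : Finset (Option (Finset (Fin m))) := insert none (Q.parts.image Option.some) with hu
  set s : Finset (Option (Finset (Fin m))) :=
    (Q.parts.filter fun B => 2 ≤ B.card).image Option.some with hs
  have hsu : s ⊆ u := by
    intro x hx
    obtain ⟨B, hB, rfl⟩ := mem_image.1 hx
    exact mem_insert.2 (Or.inr (mem_image.2 ⟨B, (mem_filter.1 hB).1, rfl⟩))
  have hcond : ∀ f : Fin n → Option (Finset (Fin m)),
      Cond Q f ↔ ((∀ j, f j ∈ u) ∧ ∀ x ∈ s, ∃ j, f j = x) := by
    intro f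
    constructor
    · rintro ⟨h1, h2⟩
      constructor
      · intro j
        cases hfj : f j with
        | none => exact mem_insert_self _ _
        | some B => exact mem_insert.2 (Or.inr (mem_image.2 ⟨B, h1 j B hfj, rfl⟩))
      · intro x hx
        obtain ⟨B, hB, rfl⟩ := mem_image.1 hx
        exact h2 B (mem_filter.1 hB).1 (mem_filter.1 hB).2
    · rintro ⟨h1, h2⟩
      constructor
      · intro j B hfj
        have := h1 j
        rw [hfj] at this
        rcases mem_insert.1 this with h | h
        · exact absurd h (by simp)
        · obtain ⟨B', hB', hBB⟩ := mem_image.1 h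
          exact (Option.some_injective _ hBB) ▸ hB'
      · intro B hB hcard
        exact h2 (some B) (mem_image.2 ⟨B, mem_filter.2 ⟨hB, hcard⟩, rfl⟩)
  have hcards : Nat.card {f : Fin n → Option (Finset (Fin m)) // Cond Q f}
      = (Finset.univ.filter (fun f : Fin n → Option (Finset (Fin m)) =>
          (∀ j, f j ∈ u) ∧ ∀ x ∈ s, ∃ j, f j = x)).card := by
    rw [Nat.card_eq_fintype_card]
    rw [Fintype.card_subtype]
    congr 1
    apply Finset.filter_congr
    intro f _
    rw [hcond f]
  rw [hcards, count_fun n s u hsu]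
  have hucard : u.card = Q.parts.card + 1 := by
    rw [hu, card_insert_of_notMem (by simp), card_image_of_injective _ (Option.some_injective _)]
  rw [hucard]
  refine Finset.sum_congr rfl fun t ht => ?_
  push_cast
  ring

lemma main_count (m n : ℕ) :
    (compCount (KG m n) : ℤ)
      = ∑ Q : Finpartition (Finset.univ : Finset (Fin m)),
          ∑ t ∈ ((Q.parts.filter fun B => 2 ≤ B.card).image Option.some).powerset,
            (-1) ^ t.card * ((Q.parts.card : ℤ) + 1 - t.card) ^ n := by
  classical
  rw [compCount]
  rw [Nat.card_congr (mainEquiv m n)]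
  rw [Nat.card_congr (Equiv.subtypeProdEquivSigmaSubtype
    (fun (Q : Finpartition (Finset.univ : Finset (Fin m)))
      (f : Fin n → Option (Finset (Fin m))) => Cond Q f))]
  rw [Nat.card_eq_fintype_card, Fintype.card_sigma]
  push_cast
  refine Finset.sum_congr rfl fun Q _ => ?_
  rw [← Nat.card_eq_fintype_card]
  exact card_cond_fiber m n Q

/-- **Knopfmacher–Mays formula, existence form.**
For every `m ≥ 0` there exist integers `a_{m,1}, …, a_{m,m+1}` (independent of `n`) such that
`C(K_{m,n}) = ∑_{i=1}^{m+1} a_{m,i} · iⁿ` for all `n ≥ 0`. -/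
theorem compCount_completeBipartiteGraph_exists_coeffs (m : ℕ) :
    ∃ a : ℕ → ℤ, ∀ n : ℕ,
      (compCount (completeBipartiteGraph (Fin m) (Fin n)) : ℤ) =
        ∑ i ∈ Finset.Icc 1 (m + 1), a i * (i : ℤ) ^ n := by
  classical
  refine ⟨fun i => ∑ Q : Finpartition (Finset.univ : Finset (Fin m)),
      ∑ t ∈ ((Q.parts.filter fun B => 2 ≤ B.card).image Option.some).powerset.filter
          (fun t => Q.parts.card + 1 - t.card = i),
        (-1 : ℤ) ^ t.card, ?_⟩
  intro n
  rw [show completeBipartiteGraph (Fin m) (Fin n) = KG m n from rfl]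
  rw [main_count m n]
  have hcardle : ∀ (Q : Finpartition (Finset.univ : Finset (Fin m)))
      (t : Finset (Option (Finset (Fin m)))),
      t ∈ ((Q.parts.filter fun B => 2 ≤ B.card).image Option.some).powerset →
      t.card ≤ Q.parts.card := by
    intro Q t ht
    calc t.card ≤ ((Q.parts.filter fun B => 2 ≤ B.card).image Option.some).card :=
          card_le_card (mem_powerset.1 ht)
      _ = (Q.parts.filter fun B => 2 ≤ B.card).card :=
          card_image_of_injective _ (Option.some_injective _)
      _ ≤ Q.parts.card := card_filter_le _ _
  have hQm : ∀ Q : Finpartition (Finset.univ : Finset (Fin m)), Q.parts.card ≤ m := by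
    intro Q
    have := Q.card_parts_le_card
    simpa using this
  -- rewrite each summand with the ℕ-valued base
  have step1 : ∀ Q : Finpartition (Finset.univ : Finset (Fin m)),
      ∑ t ∈ ((Q.parts.filter fun B => 2 ≤ B.card).image Option.some).powerset,
          (-1 : ℤ) ^ t.card * ((Q.parts.card : ℤ) + 1 - t.card) ^ n
        = ∑ i ∈ Finset.Icc 1 (m + 1),
            (∑ t ∈ ((Q.parts.filter fun B => 2 ≤ B.card).image Option.some).powerset.filter
              (fun t => Q.parts.card + 1 - t.card = i), (-1 : ℤ) ^ t.card) * (i : ℤ) ^ n := by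
    intro Q
    have hmaps : ∀ t ∈ ((Q.parts.filter fun B => 2 ≤ B.card).image Option.some).powerset,
        Q.parts.card + 1 - t.card ∈ Finset.Icc 1 (m + 1) := by
      intro t ht
      have h1 := hcardle Q t ht
      have h2 := hQm Q
      rw [Finset.mem_Icc]
      omega
    rw [← Finset.sum_fiberwise_of_maps_to hmaps (fun t => (-1 : ℤ) ^ t.card
        * ((Q.parts.card : ℤ) + 1 - t.card) ^ n)]
    refine Finset.sum_congr rfl fun i _ => ?_
    rw [Finset.sum_mul]
    refine Finset.sum_congr rfl fun t ht => ?_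
    obtain ⟨htp, hti⟩ := mem_filter.1 ht
    have h1 : ((Q.parts.card : ℤ) + 1 - t.card) = ((Q.parts.card + 1 - t.card : ℕ) : ℤ) := by
      have := hcardle Q t htp
      push_cast [Nat.cast_sub (by omega : t.card ≤ Q.parts.card + 1)]
      ring
    rw [h1, hti]
  rw [Finset.sum_congr rfl fun Q _ => step1 Q]
  rw [Finset.sum_comm]
  refine Finset.sum_congr rfl fun i _ => ?_
  rw [Finset.sum_mul]
end Bij
end
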